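/- Outcome of the Maker-Breaker domination game on products of stars: for n ≥ m ≥ 2, o(K_{1,m} □ K_{1,n}) equals D if m = n = 2, equals N if m = 2 and n ≥ 3, and equals S if n ≥ m ≥ 3. -/

import Mathlib

open SimpleGraph

namespace MBD

variable {V : Type*}

/-- Dominator's claimed set `D` is a dominating set of `G`. -/
def Dominates (G : SimpleGraph V) (D : Finset V) : Prop :=
  ∀ v : V, ∃ d ∈ D, d = v ∨ G.Adj d v

/-- Staller's claimed set `S` contains the whole closed neighborhood of some vertex. -/
def StallerWinSet (G : SimpleGraph V) (S : Finset V) : Prop :=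
  ∃ v : V, ∀ u : V, (u = v ∨ G.Adj u v) → u ∈ S

variable [DecidableEq V]

mutual
  /-- `DomD G k D S`: with Dominator having claimed `D`, Staller `S`, and Dominator to
  move, Dominator has a strategy winning the Maker-Breaker domination game on `G`
  using at most `k` further moves of his own. -/
  inductive DomD (G : SimpleGraph V) : ℕ → Finset V → Finset V → Prop
    | win {k : ℕ} {D S : Finset V} : Dominates G D → DomD G k D S
    | move {k : ℕ} {D S : Finset V} (v : V) : v ∉ D → v ∉ S →
        DomS G k (insert v D) S → DomD G (k + 1) D S
  /-- Like `DomD`, but it is Staller's turn to move. -/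
  inductive DomS (G : SimpleGraph V) : ℕ → Finset V → Finset V → Prop
    | win {k : ℕ} {D S : Finset V} : Dominates G D → DomS G k D S
    | move {k : ℕ} {D S : Finset V} : (∃ v : V, v ∉ D ∧ v ∉ S) →
        (∀ v : V, v ∉ D → v ∉ S → DomD G k D (insert v S)) → DomS G k D S
end

mutual
  /-- `StallD G k D S`: with Dominator having claimed `D`, Staller `S`, and Dominator to
  move, Staller has a strategy winning (claiming a whole closed neighborhood) within at
  most `k` further moves of her own. -/
  inductive StallD (G : SimpleGraph V) : ℕ → Finset V → Finset V → Prop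
    | win {k : ℕ} {D S : Finset V} : StallerWinSet G S → StallD G k D S
    | move {k : ℕ} {D S : Finset V} : (∃ v : V, v ∉ D ∧ v ∉ S) →
        (∀ v : V, v ∉ D → v ∉ S → StallS G k (insert v D) S) → StallD G k D S
  /-- Like `StallD`, but it is Staller's turn to move. -/
  inductive StallS (G : SimpleGraph V) : ℕ → Finset V → Finset V → Prop
    | win {k : ℕ} {D S : Finset V} : StallerWinSet G S → StallS G k D S
    | move {k : ℕ} {D S : Finset V} (v : V) : v ∉ D → v ∉ S →
        StallD G k D (insert v S) → StallS G (k + 1) D S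
end

/-- Dominator has a winning strategy in the D-game (Dominator starts). -/
def DominatorWinsD (G : SimpleGraph V) : Prop := ∃ k, DomD G k ∅ ∅

/-- Dominator has a winning strategy in the S-game (Staller starts). -/
def DominatorWinsS (G : SimpleGraph V) : Prop := ∃ k, DomS G k ∅ ∅

/-- Staller has a winning strategy in the D-game (Dominator starts). -/
def StallerWinsD (G : SimpleGraph V) : Prop := ∃ k, StallD G k ∅ ∅

/-- Staller has a winning strategy in the S-game (Staller starts). -/
def StallerWinsS (G : SimpleGraph V) : Prop := ∃ k, StallS G k ∅ ∅

/-- Outcome `𝒟`: Dominator wins both the D-game and the S-game. -/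
def outcomeD (G : SimpleGraph V) : Prop := DominatorWinsD G ∧ DominatorWinsS G

/-- Outcome `𝒮`: Staller wins both the D-game and the S-game. -/
def outcomeS (G : SimpleGraph V) : Prop := StallerWinsD G ∧ StallerWinsS G

/-- Outcome `𝒩`: the first player wins in both games. -/
def outcomeN (G : SimpleGraph V) : Prop := DominatorWinsD G ∧ StallerWinsS G

/-- `γ_MB(G)`: the minimum number of Dominator's moves needed to win the D-game,
`∞` if he has no winning strategy. -/
noncomputable def gMB (G : SimpleGraph V) : ℕ∞ :=
  sInf ((fun k : ℕ => (k : ℕ∞)) '' {k | DomD G k ∅ ∅})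

/-- `γ_MB'(G)`: the minimum number of Dominator's moves needed to win the S-game. -/
noncomputable def gMB' (G : SimpleGraph V) : ℕ∞ :=
  sInf ((fun k : ℕ => (k : ℕ∞)) '' {k | DomS G k ∅ ∅})

/-- `γ_SMB(G)`: the minimum number of Staller's moves needed to win the D-game. -/
noncomputable def gSMB (G : SimpleGraph V) : ℕ∞ :=
  sInf ((fun k : ℕ => (k : ℕ∞)) '' {k | StallD G k ∅ ∅})

/-- `γ_SMB'(G)`: the minimum number of Staller's moves needed to win the S-game. -/
noncomputable def gSMB' (G : SimpleGraph V) : ℕ∞ :=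
  sInf ((fun k : ℕ => (k : ℕ∞)) '' {k | StallS G k ∅ ∅})

end MBD


namespace SPG

abbrev V (m n : ℕ) := (Fin 1 ⊕ Fin m) × (Fin 1 ⊕ Fin n)

abbrev G (m n : ℕ) : SimpleGraph (V m n) :=
  completeBipartiteGraph (Fin 1) (Fin m) □ completeBipartiteGraph (Fin 1) (Fin n)

instance instDecCBG (A B : Type*) : DecidableRel (completeBipartiteGraph A B).Adj := fun a b =>
  decidable_of_iff' _ (iff_of_eq (completeBipartiteGraph_adj A B a b))

instance (m n : ℕ) : DecidableRel (G m n).Adj := fun _ _ =>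
  decidable_of_iff' _ (boxProd_adj)

variable {m n : ℕ}

def o : V m n := (Sum.inl 0, Sum.inl 0)
def r (i : Fin m) : V m n := (Sum.inr i, Sum.inl 0)
def c (j : Fin n) : V m n := (Sum.inl 0, Sum.inr j)
def x (i : Fin m) (j : Fin n) : V m n := (Sum.inr i, Sum.inr j)

lemma adj_o_r (i : Fin m) : (G m n).Adj o (r i) := by
  simp [o, r, boxProd_adj]
lemma adj_o_c (j : Fin n) : (G m n).Adj o (c j) := by
  simp [o, c, boxProd_adj]
lemma adj_r_x (i : Fin m) (j : Fin n) : (G m n).Adj (r i) (x i j) := by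
  simp [r, x, boxProd_adj]
lemma adj_c_x (i : Fin m) (j : Fin n) : (G m n).Adj (c j) (x i j) := by
  simp [c, x, boxProd_adj]

/-- closed neighborhood upper bound for a leaf-leaf vertex -/
lemma nbhd_x {u : V m n} (i : Fin m) (j : Fin n) (h : u = x i j ∨ (G m n).Adj u (x i j)) :
    u = x i j ∨ u = r i ∨ u = c j := by
  obtain rfl | h := h
  · exact Or.inl rfl
  · obtain ⟨a | a, b | b⟩ := u
    · simp [boxProd_adj, x] at h
    · simp only [boxProd_adj, x, completeBipartiteGraph_adj] at h
      simp at h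
      right; right; simp [c, h, Fin.eq_zero a]
    · simp only [boxProd_adj, x, completeBipartiteGraph_adj] at h
      simp at h
      right; left; simp [r, h, Fin.eq_zero b]
    · simp [boxProd_adj, x] at h
lemma nbhd_r {u : V m n} (i : Fin m) (h : u = r i ∨ (G m n).Adj u (r i)) :
    u = r i ∨ u = o ∨ ∃ j, u = x i j := by
  obtain rfl | h := h
  · exact Or.inl rfl
  · obtain ⟨a | a, b | b⟩ := u
    · right; left; simp [o, Fin.eq_zero]
    · simp [boxProd_adj, r] at h
    · simp [boxProd_adj, r] at h
    · simp only [boxProd_adj, r, completeBipartiteGraph_adj] at h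
      simp at h
      right; right; exact ⟨b, by simp [x, h]⟩

lemma nbhd_c {u : V m n} (j : Fin n) (h : u = c j ∨ (G m n).Adj u (c j)) :
    u = c j ∨ u = o ∨ ∃ i, u = x i j := by
  obtain rfl | h := h
  · exact Or.inl rfl
  · obtain ⟨a | a, b | b⟩ := u
    · right; left; simp [o, Fin.eq_zero]
    · simp [boxProd_adj, c] at h
    · simp [boxProd_adj, c] at h
    · simp only [boxProd_adj, c, completeBipartiteGraph_adj] at h
      simp at h
      right; right; exact ⟨a, by simp [x, h]⟩

end SPG

namespace SPG
open MBD
variable {m n : ℕ} {D S : Finset (V m n)}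

/-! ### Fin helpers -/

lemma fin_other {N : ℕ} (h2 : 2 ≤ N) (a : Fin N) : ∃ b : Fin N, b ≠ a := by
  by_contra h
  push_neg at h
  have hsub : (Finset.univ : Finset (Fin N)) ⊆ {a} := fun b _ => by simp [h b]
  have := Finset.card_le_card hsub
  simp [Finset.card_univ] at this
  omega

lemma fin_third {N : ℕ} (h3 : 3 ≤ N) (p q : Fin N) : ∃ a : Fin N, a ≠ p ∧ a ≠ q := by
  by_contra h
  push_neg at h
  have hsub : (Finset.univ : Finset (Fin N)) ⊆ {p, q} := by
    intro b _
    simp only [Finset.mem_insert, Finset.mem_singleton]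
    by_cases hb : b = p
    · exact Or.inl hb
    · exact Or.inr (h b hb)
  have h1 := Finset.card_le_card hsub
  have h2 := Finset.card_insert_le p ({q} : Finset (Fin N))
  simp [Finset.card_univ] at h1 h2
  omega

lemma fin_two_ne {N : ℕ} (h3 : 3 ≤ N) (b : Fin N) :
    ∃ a₁ a₂ : Fin N, a₁ ≠ a₂ ∧ a₁ ≠ b ∧ a₂ ≠ b := by
  obtain ⟨a₁, h₁, -⟩ := fin_third h3 b b
  obtain ⟨a₂, h₂, h₃⟩ := fin_third h3 a₁ b
  exact ⟨a₁, a₂, fun h => h₂ h.symm, h₁, h₃⟩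

/-! ### Staller immediate wins -/

lemma winNow_x (i : Fin m) (j : Fin n) (k : ℕ)
    (hr : r i ∈ S) (hx : x i j ∈ S) (hcD : c j ∉ D) (hcS : c j ∉ S) :
    StallS (G m n) (k + 1) D S :=
  StallS.move (c j) hcD hcS (StallD.win ⟨x i j, fun u hu => by
    rcases nbhd_x i j hu with rfl | rfl | rfl <;> simp [hr, hx]⟩)

lemma winNow_x' (i : Fin m) (j : Fin n) (k : ℕ)
    (hc : c j ∈ S) (hx : x i j ∈ S) (hrD : r i ∉ D) (hrS : r i ∉ S) :
    StallS (G m n) (k + 1) D S :=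
  StallS.move (r i) hrD hrS (StallD.win ⟨x i j, fun u hu => by
    rcases nbhd_x i j hu with rfl | rfl | rfl <;> simp [hc, hx]⟩)

lemma winNow_r (i : Fin m) (k : ℕ)
    (hr : r i ∈ S) (hx : ∀ j, x i j ∈ S) (hoD : o ∉ D) (hoS : o ∉ S) :
    StallS (G m n) (k + 1) D S :=
  StallS.move o hoD hoS (StallD.win ⟨r i, fun u hu => by
    rcases nbhd_r i hu with rfl | rfl | ⟨j, rfl⟩ <;> simp [hr, hx]⟩)

lemma winNow_c (j : Fin n) (k : ℕ)
    (hc : c j ∈ S) (hx : ∀ i, x i j ∈ S) (hoD : o ∉ D) (hoS : o ∉ S) :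
    StallS (G m n) (k + 1) D S :=
  StallS.move o hoD hoS (StallD.win ⟨c j, fun u hu => by
    rcases nbhd_c j hu with rfl | rfl | ⟨i, rfl⟩ <;> simp [hc, hx]⟩)

/-! ### Staller double threats -/

lemma stall_two_cells (i i' : Fin m) (j : Fin n) (hii : i ≠ i') (k : ℕ)
    (hri : r i ∈ S) (hri' : r i' ∈ S) (hc : c j ∈ S)
    (h1D : x i j ∉ D) (h1S : x i j ∉ S) (h2D : x i' j ∉ D) (h2S : x i' j ∉ S) :
    StallD (G m n) (k + 1) D S := by
  refine StallD.move ⟨x i j, h1D, h1S⟩ (fun v hvD hvS => ?_)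
  by_cases hv : v = x i j
  · refine StallS.move (x i' j) ?_ h2S (StallD.win ⟨x i' j, fun u hu => by
      rcases nbhd_x i' j hu with rfl | rfl | rfl <;> simp [hri', hc]⟩)
    simp only [Finset.mem_insert, hv]
    push_neg
    exact ⟨by simp [x, Ne.symm hii], h2D⟩
  · refine StallS.move (x i j) ?_ h1S (StallD.win ⟨x i j, fun u hu => by
      rcases nbhd_x i j hu with rfl | rfl | rfl <;> simp [hri, hc]⟩)
    simp only [Finset.mem_insert]
    push_neg
    exact ⟨fun h => hv h.symm, h1D⟩

lemma stall_two_cells' (j j' : Fin n) (i : Fin m) (hjj : j ≠ j') (k : ℕ)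
    (hcj : c j ∈ S) (hcj' : c j' ∈ S) (hr : r i ∈ S)
    (h1D : x i j ∉ D) (h1S : x i j ∉ S) (h2D : x i j' ∉ D) (h2S : x i j' ∉ S) :
    StallD (G m n) (k + 1) D S := by
  refine StallD.move ⟨x i j, h1D, h1S⟩ (fun v hvD hvS => ?_)
  by_cases hv : v = x i j
  · refine StallS.move (x i j') ?_ h2S (StallD.win ⟨x i j', fun u hu => by
      rcases nbhd_x i j' hu with rfl | rfl | rfl <;> simp [hcj', hr]⟩)
    simp only [Finset.mem_insert, hv]
    push_neg
    exact ⟨by simp [x, Ne.symm hjj], h2D⟩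
  · refine StallS.move (x i j) ?_ h1S (StallD.win ⟨x i j, fun u hu => by
      rcases nbhd_x i j hu with rfl | rfl | rfl <;> simp [hcj, hr]⟩)
    simp only [Finset.mem_insert]
    push_neg
    exact ⟨fun h => hv h.symm, h1D⟩

/-- Double threat: Staller holds two rows; two untouched columns guarantee a win
(Dominator to move). -/
lemma stall_double (i i' : Fin m) (j₁ j₂ : Fin n) (hii : i ≠ i') (hjj : j₁ ≠ j₂) (k : ℕ)
    (hri : r i ∈ S) (hri' : r i' ∈ S)
    (hfr : ∀ j, j = j₁ ∨ j = j₂ →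
      (c j ∉ D ∧ c j ∉ S) ∧ (x i j ∉ D ∧ x i j ∉ S) ∧ (x i' j ∉ D ∧ x i' j ∉ S)) :
    StallD (G m n) (k + 2) D S := by
  refine StallD.move ⟨c j₁, (hfr j₁ (Or.inl rfl)).1⟩ (fun v hvD hvS => ?_)
  have key : ∃ j, (j = j₁ ∨ j = j₂) ∧ v ≠ c j ∧ v ≠ x i j ∧ v ≠ x i' j := by
    by_cases hv : v = c j₁ ∨ v = x i j₁ ∨ v = x i' j₁
    · refine ⟨j₂, Or.inr rfl, ?_, ?_, ?_⟩ <;>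
        (rcases hv with rfl | rfl | rfl <;> simp [c, x, hjj, Ne.symm hjj])
    · push_neg at hv
      exact ⟨j₁, Or.inl rfl, hv.1, hv.2.1, hv.2.2⟩
  obtain ⟨j, hj, hc1, hx1, hx2⟩ := key
  obtain ⟨⟨hcD, hcS⟩, ⟨hxD, hxS⟩, ⟨hx'D, hx'S⟩⟩ := hfr j hj
  refine StallS.move (c j) (by simp [hcD, Ne.symm hc1]) hcS ?_
  refine stall_two_cells i i' j hii k (Finset.mem_insert_of_mem hri)
    (Finset.mem_insert_of_mem hri') (Finset.mem_insert_self _ _) ?_ ?_ ?_ ?_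
  · simp only [Finset.mem_insert]; push_neg; exact ⟨fun h => hx1 h.symm, hxD⟩
  · simp only [Finset.mem_insert]; push_neg; exact ⟨by simp [x, c], hxS⟩
  · simp only [Finset.mem_insert]; push_neg; exact ⟨fun h => hx2 h.symm, hx'D⟩
  · simp only [Finset.mem_insert]; push_neg; exact ⟨by simp [x, c], hx'S⟩

/-- Transposed double threat: Staller holds two columns, two untouched rows. -/
lemma stall_double' (j j' : Fin n) (i₁ i₂ : Fin m) (hjj : j ≠ j') (hii : i₁ ≠ i₂) (k : ℕ)
    (hcj : c j ∈ S) (hcj' : c j' ∈ S)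
    (hfr : ∀ i, i = i₁ ∨ i = i₂ →
      (r i ∉ D ∧ r i ∉ S) ∧ (x i j ∉ D ∧ x i j ∉ S) ∧ (x i j' ∉ D ∧ x i j' ∉ S)) :
    StallD (G m n) (k + 2) D S := by
  refine StallD.move ⟨r i₁, (hfr i₁ (Or.inl rfl)).1⟩ (fun v hvD hvS => ?_)
  have key : ∃ i, (i = i₁ ∨ i = i₂) ∧ v ≠ r i ∧ v ≠ x i j ∧ v ≠ x i j' := by
    by_cases hv : v = r i₁ ∨ v = x i₁ j ∨ v = x i₁ j'
    · refine ⟨i₂, Or.inr rfl, ?_, ?_, ?_⟩ <;>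
        (rcases hv with rfl | rfl | rfl <;> simp [r, x, hii, Ne.symm hii])
    · push_neg at hv
      exact ⟨i₁, Or.inl rfl, hv.1, hv.2.1, hv.2.2⟩
  obtain ⟨i, hi, hr1, hx1, hx2⟩ := key
  obtain ⟨⟨hrD, hrS⟩, ⟨hxD, hxS⟩, ⟨hx'D, hx'S⟩⟩ := hfr i hi
  refine StallS.move (r i) (by simp [hrD, Ne.symm hr1]) hrS ?_
  refine stall_two_cells' j j' i hjj k (Finset.mem_insert_of_mem hcj)
    (Finset.mem_insert_of_mem hcj') (Finset.mem_insert_self _ _) ?_ ?_ ?_ ?_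
  · simp only [Finset.mem_insert]; push_neg; exact ⟨fun h => hx1 h.symm, hxD⟩
  · simp only [Finset.mem_insert]; push_neg; exact ⟨by simp [x, r], hxS⟩
  · simp only [Finset.mem_insert]; push_neg; exact ⟨fun h => hx2 h.symm, hx'D⟩
  · simp only [Finset.mem_insert]; push_neg; exact ⟨by simp [x, r], hx'S⟩

/-- Dance: Staller holds `r i` and all cells of row `i` outside `L`; the columns in `L`
are untouched, as is `o`.  It is Staller's move; she wins. -/
lemma stall_dance (i : Fin m) (L : List (Fin n)) (k : ℕ) (hnd : L.Nodup) (hne : L ≠ [])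
    (hr : r i ∈ S) (hx : ∀ j, j ∉ L → x i j ∈ S)
    (hfree : ∀ j ∈ L, (c j ∉ D ∧ c j ∉ S) ∧ (x i j ∉ D ∧ x i j ∉ S))
    (hoD : o ∉ D) (hoS : o ∉ S) :
    StallS (G m n) (k + L.length + 1) D S := by
  induction L generalizing D S with
  | nil => exact absurd rfl hne
  | cons j t ih =>
    obtain ⟨⟨hcD, hcS⟩, ⟨hxD, hxS⟩⟩ := hfree j (by simp)
    refine StallS.move (x i j) hxD hxS (StallD.move ⟨o, hoD, by
      simp only [Finset.mem_insert]; push_neg; exact ⟨by simp [o, x], hoS⟩⟩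
      (fun v hvD hvS => ?_))
    by_cases hvc : v = c j
    · subst hvc
      cases t with
      | nil =>
        refine winNow_r i (k + 0) (Finset.mem_insert_of_mem hr) (fun j' => ?_) ?_ ?_
        · by_cases hj' : j' = j
          · subst hj'; exact Finset.mem_insert_self _ _
          · exact Finset.mem_insert_of_mem (hx j' (by simp [hj']))
        · simp only [Finset.mem_insert]; push_neg; exact ⟨by simp [o, c], hoD⟩
        · simp only [Finset.mem_insert]; push_neg; exact ⟨by simp [o, x], hoS⟩
      | cons j' t' =>
        have hnd' : (j' :: t').Nodup := (List.nodup_cons.1 hnd).2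
        have hjnot : j ∉ j' :: t' := (List.nodup_cons.1 hnd).1
        have := ih hnd' (by simp)
          (S := insert (x i j) S) (D := insert (c j) D)
          (Finset.mem_insert_of_mem hr)
          (fun j'' hj'' => by
            by_cases h : j'' = j
            · subst h; exact Finset.mem_insert_self _ _
            · exact Finset.mem_insert_of_mem (hx j'' (by simp [h, hj''])))
          (fun j'' hj'' => by
            have hj''ne : j'' ≠ j := fun h => hjnot (h ▸ hj'')
            obtain ⟨⟨h1, h2⟩, ⟨h3, h4⟩⟩ := hfree j'' (by simp [hj''])
            refine ⟨⟨?_, ?_⟩, ⟨?_, ?_⟩⟩ <;> simp only [Finset.mem_insert] <;> push_neg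
            · exact ⟨by simp [c, hj''ne], h1⟩
            · exact ⟨by simp [c, x], h2⟩
            · exact ⟨by simp [x, c], h3⟩
            · exact ⟨by simp [x, hj''ne], h4⟩)
          (by simp only [Finset.mem_insert]; push_neg; exact ⟨by simp [o, c], hoD⟩)
          (by simp only [Finset.mem_insert]; push_neg; exact ⟨by simp [o, x], hoS⟩)
        simpa [Nat.add_assoc] using this
    · refine winNow_x i j (k + t.length) (Finset.mem_insert_of_mem hr)
        (Finset.mem_insert_self _ _) ?_ ?_
      · simp only [Finset.mem_insert]; push_neg; exact ⟨fun h => hvc h.symm, hcD⟩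
      · simp only [Finset.mem_insert]; push_neg; exact ⟨by simp [c, x], hcS⟩

/-- Transposed dance along a column. -/
lemma stall_dance' (j : Fin n) (L : List (Fin m)) (k : ℕ) (hnd : L.Nodup) (hne : L ≠ [])
    (hc : c j ∈ S) (hx : ∀ i, i ∉ L → x i j ∈ S)
    (hfree : ∀ i ∈ L, (r i ∉ D ∧ r i ∉ S) ∧ (x i j ∉ D ∧ x i j ∉ S))
    (hoD : o ∉ D) (hoS : o ∉ S) :
    StallS (G m n) (k + L.length + 1) D S := by
  induction L generalizing D S with
  | nil => exact absurd rfl hne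
  | cons i t ih =>
    obtain ⟨⟨hrD, hrS⟩, ⟨hxD, hxS⟩⟩ := hfree i (by simp)
    refine StallS.move (x i j) hxD hxS (StallD.move ⟨o, hoD, by
      simp only [Finset.mem_insert]; push_neg; exact ⟨by simp [o, x], hoS⟩⟩
      (fun v hvD hvS => ?_))
    by_cases hvc : v = r i
    · subst hvc
      cases t with
      | nil =>
        refine winNow_c j (k + 0) (Finset.mem_insert_of_mem hc) (fun i' => ?_) ?_ ?_
        · by_cases hi' : i' = i
          · subst hi'; exact Finset.mem_insert_self _ _
          · exact Finset.mem_insert_of_mem (hx i' (by simp [hi']))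
        · simp only [Finset.mem_insert]; push_neg; exact ⟨by simp [o, r], hoD⟩
        · simp only [Finset.mem_insert]; push_neg; exact ⟨by simp [o, x], hoS⟩
      | cons i' t' =>
        have hnd' : (i' :: t').Nodup := (List.nodup_cons.1 hnd).2
        have hinot : i ∉ i' :: t' := (List.nodup_cons.1 hnd).1
        have := ih hnd' (by simp)
          (S := insert (x i j) S) (D := insert (r i) D)
          (Finset.mem_insert_of_mem hc)
          (fun i'' hi'' => by
            by_cases h : i'' = i
            · subst h; exact Finset.mem_insert_self _ _
            · exact Finset.mem_insert_of_mem (hx i'' (by simp [h, hi''])))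
          (fun i'' hi'' => by
            have hi''ne : i'' ≠ i := fun h => hinot (h ▸ hi'')
            obtain ⟨⟨h1, h2⟩, ⟨h3, h4⟩⟩ := hfree i'' (by simp [hi''])
            refine ⟨⟨?_, ?_⟩, ⟨?_, ?_⟩⟩ <;> simp only [Finset.mem_insert] <;> push_neg
            · exact ⟨by simp [r, hi''ne], h1⟩
            · exact ⟨by simp [r, x], h2⟩
            · exact ⟨by simp [x, r], h3⟩
            · exact ⟨by simp [x, hi''ne], h4⟩)
          (by simp only [Finset.mem_insert]; push_neg; exact ⟨by simp [o, r], hoD⟩)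
          (by simp only [Finset.mem_insert]; push_neg; exact ⟨by simp [o, x], hoS⟩)
        simpa [Nat.add_assoc] using this
    · refine winNow_x' i j (k + t.length) (Finset.mem_insert_of_mem hc)
        (Finset.mem_insert_self _ _) ?_ ?_
      · simp only [Finset.mem_insert]; push_neg; exact ⟨fun h => hvc h.symm, hrD⟩
      · simp only [Finset.mem_insert]; push_neg; exact ⟨by simp [r, x], hrS⟩

/-! ### Staller wins the S-game when `m ≥ 2`, `n ≥ 3` -/

lemma stallerWinsS (hm : 2 ≤ m) (hn : 3 ≤ n) : StallerWinsS (G m n) := by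
  have h0 : (0 : ℕ) < m := by omega
  have h1 : (1 : ℕ) < m := by omega
  set i0 : Fin m := ⟨0, h0⟩ with hi0
  set i1 : Fin m := ⟨1, h1⟩ with hi1
  have hi01 : i0 ≠ i1 := by simp [hi0, hi1, Fin.ext_iff]
  refine ⟨n + 5, StallS.move (r i0) (by simp) (by simp)
    (StallD.move ⟨o, by simp, by simp [o, r]⟩ (fun v hvD hvS => ?_))⟩
  obtain ⟨va | vi, vb | vj⟩ := v
  · -- v = o : race for two rows
    refine StallS.move (r i1) (by simp [r]) (by simp [r, Fin.ext_iff, hi0, hi1]) ?_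
    obtain ⟨j₁, j₂, hjj, -, -⟩ := fin_two_ne hn ⟨0, by omega⟩
    refine stall_double i0 i1 j₁ j₂ hi01 hjj (n + 1) (by simp) (by simp) ?_
    intro j hj
    refine ⟨⟨by simp [c], by simp [c, r]⟩, ⟨by simp [x], by simp [x, r]⟩,
      ⟨by simp [x], by simp [x, r]⟩⟩
  · -- v = c vj
    refine StallS.move (r i1) (by simp [r, c]) (by simp [r, Fin.ext_iff, hi0, hi1]) ?_
    obtain ⟨j₁, j₂, hjj, hj₁, hj₂⟩ := fin_two_ne hn vj
    refine stall_double i0 i1 j₁ j₂ hi01 hjj (n + 1) (by simp) (by simp) ?_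
    intro j hj
    have hjne : j ≠ vj := by rcases hj with rfl | rfl <;> assumption
    exact ⟨⟨by simp [c, hjne], by simp [c, r]⟩, ⟨by simp [x, c], by simp [x, r]⟩,
      ⟨by simp [x, c], by simp [x, r]⟩⟩
  · -- v = r vi : dance
    have hvb : vb = 0 := Fin.eq_zero vb
    subst hvb
    have hlen : n + 4 = 3 + (List.finRange n).length + 1 := by
      simp [List.length_finRange]; omega
    rw [hlen]
    refine stall_dance i0 (List.finRange n) 3 (List.nodup_finRange n)
      (by simp [← List.length_eq_zero_iff]; omega) (by simp)
      (fun j hj => absurd (List.mem_finRange j) hj) ?_ (by simp [o, r]) (by simp [o, r])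
    intro j hj
    exact ⟨⟨by simp [c, r], by simp [c, r]⟩, by simp [x, r], by simp [x, r]⟩
  · -- v = x vi vj
    refine StallS.move (r i1) (by simp [r, x]) (by simp [r, Fin.ext_iff, hi0, hi1]) ?_
    obtain ⟨j₁, j₂, hjj, hj₁, hj₂⟩ := fin_two_ne hn vj
    refine stall_double i0 i1 j₁ j₂ hi01 hjj (n + 1) (by simp) (by simp) ?_
    intro j hj
    have hjne : j ≠ vj := by rcases hj with rfl | rfl <;> assumption
    exact ⟨⟨by simp [c, x], by simp [c, r]⟩, ⟨by simp [x, hjne], by simp [x, r]⟩,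
      ⟨by simp [x, hjne], by simp [x, r]⟩⟩

/-! ### Staller wins the D-game when `m ≥ 3`, `n ≥ 3` -/

lemma stallerWinsD (hm : 3 ≤ m) (hn : 3 ≤ n) : StallerWinsD (G m n) := by
  have hm2 : 2 ≤ m := by omega
  have hn0 : (0:ℕ) < n := by omega
  have hm0 : (0:ℕ) < m := by omega
  have hlenD : m + n + 5 = (m + 4) + (List.finRange n).length + 1 := by
    simp [List.length_finRange]; omega
  have hlenD' : m + n + 5 = (n + 4) + (List.finRange m).length + 1 := by
    simp [List.length_finRange]; omega
  refine ⟨m + n + 6, StallD.move ⟨o, by simp, by simp⟩ (fun v _ _ => ?_)⟩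
  obtain ⟨va | vi, vb | vj⟩ := v
  · -- v = o
    have hva : va = 0 := Fin.eq_zero va
    have hvb : vb = 0 := Fin.eq_zero vb
    subst hva hvb
    set i : Fin m := ⟨0, hm0⟩ with hidef
    refine StallS.move (r i) (by simp [r, o]) (by simp)
      (StallD.move ⟨c ⟨0, hn0⟩, by simp [c, o], by simp [c, r]⟩ (fun w hwD hwS => ?_))
    obtain ⟨wa | wi, wb | wj⟩ := w
    · -- w = o : impossible
      exact absurd (by simp [o, Fin.eq_zero]) hwD
    · -- w = c wj : double avoiding wj
      obtain ⟨i', hi'1, hi'2⟩ := fin_third hm i i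
      refine StallS.move (r i') (by simp [r, c, o]) (by simp [r, hi'1]) ?_
      obtain ⟨j₁, j₂, hjj, hj₁, hj₂⟩ := fin_two_ne hn wj
      refine stall_double i i' j₁ j₂ (Ne.symm hi'1) hjj (m + n + 2)
        (by simp) (by simp) ?_
      intro j hj
      have hjne : j ≠ wj := by rcases hj with rfl | rfl <;> assumption
      exact ⟨⟨by simp [c, o, hjne], by simp [c, r]⟩,
        ⟨by simp [x, c, o], by simp [x, r]⟩, ⟨by simp [x, c, o], by simp [x, r]⟩⟩
    · -- w = r wi : double, any columns
      obtain ⟨i', hi'1, hi'2⟩ := fin_third hm i wi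
      refine StallS.move (r i') (by simp [r, o, Fin.ext_iff] at hi'2 ⊢; omega) (by simp [r, hi'1]) ?_
      obtain ⟨j₁, j₂, hjj, -, -⟩ := fin_two_ne hn ⟨0, hn0⟩
      refine stall_double i i' j₁ j₂ (Ne.symm hi'1) hjj (m + n + 2)
        (by simp) (by simp) ?_
      intro j hj
      exact ⟨⟨by simp [c, o, r], by simp [c, r]⟩,
        ⟨by simp [x, o, r], by simp [x, r]⟩, ⟨by simp [x, o, r], by simp [x, r]⟩⟩
    · -- w = x wi wj : double avoiding column wj
      obtain ⟨i', hi'1, hi'2⟩ := fin_third hm i i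
      refine StallS.move (r i') (by simp [r, x, o]) (by simp [r, hi'1]) ?_
      obtain ⟨j₁, j₂, hjj, hj₁, hj₂⟩ := fin_two_ne hn wj
      refine stall_double i i' j₁ j₂ (Ne.symm hi'1) hjj (m + n + 2)
        (by simp) (by simp) ?_
      intro j hj
      have hjne : j ≠ wj := by rcases hj with rfl | rfl <;> assumption
      exact ⟨⟨by simp [c, o, x], by simp [c, r]⟩,
        ⟨by simp [x, o, hjne], by simp [x, r]⟩, ⟨by simp [x, o, hjne], by simp [x, r]⟩⟩
  · -- v = c vj : transposed play
    have hva : va = 0 := Fin.eq_zero va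
    subst hva
    obtain ⟨j, hj1, -⟩ := fin_third hn vj vj
    refine StallS.move (c j) (by simp [c, hj1]) (by simp)
      (StallD.move ⟨o, by simp [o, c], by simp [o, c]⟩ (fun w hwD hwS => ?_))
    obtain ⟨wa | wi, wb | wj⟩ := w
    · -- w = o : double', any rows
      have hwa : wa = 0 := Fin.eq_zero wa
      have hwb : wb = 0 := Fin.eq_zero wb
      subst hwa hwb
      obtain ⟨j', hj'1, hj'2⟩ := fin_third hn j vj
      refine StallS.move (c j') (by simp [c, o, hj'2]) (by simp [c, hj'1]) ?_
      obtain ⟨i₁, i₂, hii, -, -⟩ := fin_two_ne hm ⟨0, hm0⟩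
      refine stall_double' j j' i₁ i₂ (Ne.symm hj'1) hii (m + n + 2) (by simp) (by simp) ?_
      intro i _
      exact ⟨⟨by simp [r, o, c], by simp [r, c]⟩,
        ⟨by simp [x, o, c], by simp [x, c]⟩, ⟨by simp [x, o, c], by simp [x, c]⟩⟩
    · -- w = c wb : dance' down column j
      rw [hlenD']
      refine stall_dance' j (List.finRange m) (n + 4) (List.nodup_finRange m)
        (by simp [← List.length_eq_zero_iff]; omega) (by simp)
        (fun i hi => absurd (List.mem_finRange i) hi) ?_ (by simp [o, c]) (by simp [o, c])
      intro i _
      exact ⟨⟨by simp [r, c], by simp [r, c]⟩, by simp [x, c], by simp [x, c]⟩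
    · -- w = r wi : double' avoiding row wi
      obtain ⟨j', hj'1, hj'2⟩ := fin_third hn j vj
      refine StallS.move (c j') (by simp [c, r, hj'2]) (by simp [c, hj'1]) ?_
      obtain ⟨i₁, i₂, hii, hi₁, hi₂⟩ := fin_two_ne hm wi
      refine stall_double' j j' i₁ i₂ (Ne.symm hj'1) hii (m + n + 2) (by simp) (by simp) ?_
      intro i hi
      have hine : i ≠ wi := by rcases hi with rfl | rfl <;> assumption
      exact ⟨⟨by simp [r, c, hine], by simp [r, c]⟩,
        ⟨by simp [x, r, c], by simp [x, c]⟩, ⟨by simp [x, r, c], by simp [x, c]⟩⟩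
    · -- w = x wi wj : double' avoiding row wi
      obtain ⟨j', hj'1, hj'2⟩ := fin_third hn j vj
      refine StallS.move (c j') (by simp [c, x, hj'2]) (by simp [c, hj'1]) ?_
      obtain ⟨i₁, i₂, hii, hi₁, hi₂⟩ := fin_two_ne hm wi
      refine stall_double' j j' i₁ i₂ (Ne.symm hj'1) hii (m + n + 2) (by simp) (by simp) ?_
      intro i hi
      have hine : i ≠ wi := by rcases hi with rfl | rfl <;> assumption
      exact ⟨⟨by simp [r, x, c], by simp [r, c]⟩,
        ⟨by simp [x, c, hine], by simp [x, c]⟩, ⟨by simp [x, c, hine], by simp [x, c]⟩⟩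
  · -- v = r vi
    have hvb : vb = 0 := Fin.eq_zero vb
    subst hvb
    obtain ⟨i, hi1, -⟩ := fin_third hm vi vi
    refine StallS.move (r i) (by simp [r, hi1]) (by simp)
      (StallD.move ⟨c ⟨0, hn0⟩, by simp [c, r], by simp [c, r]⟩ (fun w hwD hwS => ?_))
    obtain ⟨wa | wi, wb | wj⟩ := w
    · -- w = o : double, any columns
      obtain ⟨i', hi'1, hi'2⟩ := fin_third hm i vi
      refine StallS.move (r i') (by simp [r, o, hi'2]) (by simp [r, hi'1]) ?_
      obtain ⟨j₁, j₂, hjj, -, -⟩ := fin_two_ne hn ⟨0, hn0⟩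
      refine stall_double i i' j₁ j₂ (Ne.symm hi'1) hjj (m + n + 2) (by simp) (by simp) ?_
      intro j _
      exact ⟨⟨by simp [c, o, r], by simp [c, r]⟩,
        ⟨by simp [x, o, r], by simp [x, r]⟩, ⟨by simp [x, o, r], by simp [x, r]⟩⟩
    · -- w = c wj : double avoiding column wj
      obtain ⟨i', hi'1, hi'2⟩ := fin_third hm i vi
      refine StallS.move (r i') (by simp [r, c, hi'2]) (by simp [r, hi'1]) ?_
      obtain ⟨j₁, j₂, hjj, hj₁, hj₂⟩ := fin_two_ne hn wj
      refine stall_double i i' j₁ j₂ (Ne.symm hi'1) hjj (m + n + 2) (by simp) (by simp) ?_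
      intro j hj
      have hjne : j ≠ wj := by rcases hj with rfl | rfl <;> assumption
      exact ⟨⟨by simp [c, r, hjne], by simp [c, r]⟩,
        ⟨by simp [x, c, r], by simp [x, r]⟩, ⟨by simp [x, c, r], by simp [x, r]⟩⟩
    · -- w = r wi : dance along row i
      rw [hlenD]
      refine stall_dance i (List.finRange n) (m + 4) (List.nodup_finRange n)
        (by simp [← List.length_eq_zero_iff]; omega) (by simp)
        (fun j hj => absurd (List.mem_finRange j) hj) ?_ (by simp [o, r]) (by simp [o, r])
      intro j _
      exact ⟨⟨by simp [c, r], by simp [c, r]⟩, by simp [x, r], by simp [x, r]⟩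
    · -- w = x wi wj : double avoiding column wj
      obtain ⟨i', hi'1, hi'2⟩ := fin_third hm i vi
      refine StallS.move (r i') (by simp [r, x, hi'2]) (by simp [r, hi'1]) ?_
      obtain ⟨j₁, j₂, hjj, hj₁, hj₂⟩ := fin_two_ne hn wj
      refine stall_double i i' j₁ j₂ (Ne.symm hi'1) hjj (m + n + 2) (by simp) (by simp) ?_
      intro j hj
      have hjne : j ≠ wj := by rcases hj with rfl | rfl <;> assumption
      exact ⟨⟨by simp [c, x, r], by simp [c, r]⟩,
        ⟨by simp [x, r, hjne], by simp [x, r]⟩, ⟨by simp [x, r, hjne], by simp [x, r]⟩⟩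
  · -- v = x vi vj : play rows avoiding row vi
    obtain ⟨i, hi1, -⟩ := fin_third hm vi vi
    refine StallS.move (r i) (by simp [r, x]) (by simp)
      (StallD.move ⟨c ⟨0, hn0⟩, by simp [c, x], by simp [c, r]⟩ (fun w hwD hwS => ?_))
    obtain ⟨wa | wi, wb | wj⟩ := w
    · -- w = o : double, rows ≠ vi, any columns? need cells ≠ x vi vj: rows ≠ vi suffices
      obtain ⟨i', hi'1, hi'2⟩ := fin_third hm i vi
      refine StallS.move (r i') (by simp [r, o, x, hi'2]) (by simp [r, hi'1]) ?_
      obtain ⟨j₁, j₂, hjj, -, -⟩ := fin_two_ne hn ⟨0, hn0⟩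
      refine stall_double i i' j₁ j₂ (Ne.symm hi'1) hjj (m + n + 2) (by simp) (by simp) ?_
      intro j _
      exact ⟨⟨by simp [c, o, x], by simp [c, r]⟩,
        ⟨by simp [x, o, hi1], by simp [x, r]⟩, ⟨by simp [x, o, hi'2], by simp [x, r]⟩⟩
    · -- w = c wj : double, rows ≠ vi, columns ≠ wj
      obtain ⟨i', hi'1, hi'2⟩ := fin_third hm i vi
      refine StallS.move (r i') (by simp [r, c, x, hi'2]) (by simp [r, hi'1]) ?_
      obtain ⟨j₁, j₂, hjj, hj₁, hj₂⟩ := fin_two_ne hn wj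
      refine stall_double i i' j₁ j₂ (Ne.symm hi'1) hjj (m + n + 2) (by simp) (by simp) ?_
      intro j hj
      have hjne : j ≠ wj := by rcases hj with rfl | rfl <;> assumption
      exact ⟨⟨by simp [c, x, hjne], by simp [c, r]⟩,
        ⟨by simp [x, c, hi1], by simp [x, r]⟩, ⟨by simp [x, c, hi'2], by simp [x, r]⟩⟩
    · -- w = r wi : dance along row i (i ≠ vi so cells avoid v)
      rw [hlenD]
      refine stall_dance i (List.finRange n) (m + 4) (List.nodup_finRange n)
        (by simp [← List.length_eq_zero_iff]; omega) (by simp)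
        (fun j hj => absurd (List.mem_finRange j) hj) ?_ (by simp [o, r, x]) (by simp [o, r, x])
      intro j _
      exact ⟨⟨by simp [c, r, x], by simp [c, r]⟩, by simp [x, r, hi1], by simp [x, r]⟩
    · -- w = x wi wj : double, rows ≠ vi, columns ≠ wj
      obtain ⟨i', hi'1, hi'2⟩ := fin_third hm i vi
      refine StallS.move (r i') (by simp [r, x, hi'2]) (by simp [r, hi'1]) ?_
      obtain ⟨j₁, j₂, hjj, hj₁, hj₂⟩ := fin_two_ne hn wj
      refine stall_double i i' j₁ j₂ (Ne.symm hi'1) hjj (m + n + 2) (by simp) (by simp) ?_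
      intro j hj
      have hjne : j ≠ wj := by rcases hj with rfl | rfl <;> assumption
      exact ⟨⟨by simp [c, x], by simp [c, r]⟩,
        ⟨by simp [x, hjne, hi1], by simp [x, r]⟩, ⟨by simp [x, hjne, hi'2], by simp [x, r]⟩⟩

/-! ### Dominator pairing strategies (generic) -/

section Pairing

variable {W : Type*} [DecidableEq W] {ι : Type*} [DecidableEq ι]

lemma dominates_mono {G : SimpleGraph W} {A B : Finset W} (h : Dominates G A)
    (hAB : A ⊆ B) : Dominates G B := fun v =>
  let ⟨d, hd, hp⟩ := h v; ⟨d, hAB hd, hp⟩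

lemma pairingS (G : SimpleGraph W) (a b : ι → W) (k : ℕ) :
    ∀ N (J : Finset ι), J.card ≤ N → ∀ D S : Finset W,
    (∀ j ∈ J, a j ∉ D ∧ a j ∉ S) →
    (∀ j ∈ J, b j ∉ D ∧ b j ∉ S) →
    (∀ j ∈ J, ∀ j' ∈ J, a j ≠ b j') →
    (∀ j ∈ J, ∀ j' ∈ J, a j = a j' → j = j') →
    (∀ j ∈ J, ∀ j' ∈ J, b j = b j' → j = j') →
    (∀ T : Finset W, (∀ j ∈ J, a j ∈ T ∨ b j ∈ T) → Dominates G (D ∪ T)) →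
    DomS G (k + J.card) D S := by
  intro N
  induction N with
  | zero =>
    intro J hJ D S _ _ _ _ _ hdom
    have hJe : J = ∅ := Finset.card_eq_zero.1 (Nat.le_zero.1 hJ)
    subst hJe
    exact DomS.win (by simpa using hdom ∅ (by simp))
  | succ N ihN =>
    intro J hJ D S hfa hfb hab hainj hbinj hdom
    rcases J.eq_empty_or_nonempty with rfl | ⟨j₀, hj₀⟩
    · exact DomS.win (by simpa using hdom ∅ (by simp))
    have hpos : 0 < J.card := Finset.card_pos.2 ⟨j₀, hj₀⟩
    refine DomS.move ⟨a j₀, (hfa j₀ hj₀).1, (hfa j₀ hj₀).2⟩ (fun v hvD hvS => ?_)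
    have step : ∀ j ∈ J, ∀ resp : ι → W,
        (∀ j' ∈ J, resp j' ∉ D) → (∀ j' ∈ J, resp j' ∉ insert v S) →
        (∀ j' ∈ J.erase j, a j' ∉ insert (resp j) D ∧ a j' ∉ insert v S) →
        (∀ j' ∈ J.erase j, b j' ∉ insert (resp j) D ∧ b j' ∉ insert v S) →
        (∀ j'' ∈ J, a j'' ∈ ({resp j} : Finset W) ∨ b j'' ∈ ({resp j} : Finset W) ∨ j'' ∈ J.erase j) →
        DomD G (k + J.card) D (insert v S) := by
      intro j hj resp hrD hrS hfa' hfb' hcomp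
      have hcard : k + J.card = (k + (J.erase j).card) + 1 := by
        rw [Finset.card_erase_of_mem hj]; omega
      rw [hcard]
      refine DomD.move (resp j) (hrD j hj) (hrS j hj) ?_
      refine ihN (J.erase j) ?_ _ _ hfa' hfb'
        (fun p hp q hq => hab p (Finset.mem_of_mem_erase hp) q (Finset.mem_of_mem_erase hq))
        (fun p hp q hq => hainj p (Finset.mem_of_mem_erase hp) q (Finset.mem_of_mem_erase hq))
        (fun p hp q hq => hbinj p (Finset.mem_of_mem_erase hp) q (Finset.mem_of_mem_erase hq))
        ?_
      · have := Finset.card_erase_of_mem hj; omega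
      · intro T hT
        have := hdom (insert (resp j) T) (fun j'' hj'' => by
          rcases hcomp j'' hj'' with h | h | h
          · exact Or.inl (Finset.mem_insert.2 (Or.inl (Finset.mem_singleton.1 h)))
          · exact Or.inr (Finset.mem_insert.2 (Or.inl (Finset.mem_singleton.1 h)))
          · rcases hT j'' h with h' | h'
            · exact Or.inl (Finset.mem_insert_of_mem h')
            · exact Or.inr (Finset.mem_insert_of_mem h'))
        rwa [Finset.union_insert, ← Finset.insert_union] at this
    by_cases hva : ∃ j ∈ J, v = a j
    · obtain ⟨j, hj, rfl⟩ := hva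
      refine step j hj b (fun j' hj' => (hfb j' hj').1)
        (fun j' hj' => by
          simp only [Finset.mem_insert]
          push_neg
          exact ⟨Ne.symm (hab j hj j' hj'), (hfb j' hj').2⟩)
        (fun j' hj' => ⟨by
          simp only [Finset.mem_insert]
          push_neg
          exact ⟨hab j' (Finset.mem_of_mem_erase hj') j hj, (hfa j' (Finset.mem_of_mem_erase hj')).1⟩, by
          simp only [Finset.mem_insert]
          push_neg
          refine ⟨fun h => (Finset.mem_erase.1 hj').1 ?_, (hfa j' (Finset.mem_of_mem_erase hj')).2⟩
          exact hainj j' (Finset.mem_of_mem_erase hj') j hj h⟩)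
        (fun j' hj' => ⟨by
          simp only [Finset.mem_insert]
          push_neg
          refine ⟨fun h => (Finset.mem_erase.1 hj').1 ?_, (hfb j' (Finset.mem_of_mem_erase hj')).1⟩
          exact hbinj j' (Finset.mem_of_mem_erase hj') j hj h, by
          simp only [Finset.mem_insert]
          push_neg
          exact ⟨Ne.symm (hab j hj j' (Finset.mem_of_mem_erase hj')), (hfb j' (Finset.mem_of_mem_erase hj')).2⟩⟩)
        (fun j'' hj'' => by
          by_cases h : j'' = j
          · subst h; exact Or.inr (Or.inl (by simp))
          · exact Or.inr (Or.inr (Finset.mem_erase.2 ⟨h, hj''⟩)))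
    · -- v is not any a j; the response is a j' for suitable j'
      have hresp : ∀ j' ∈ J, a j' ∉ insert v S := fun j' hj' => by
        simp only [Finset.mem_insert]
        push_neg
        exact ⟨fun h => hva ⟨j', hj', h.symm⟩, (hfa j' hj').2⟩
      by_cases hvb : ∃ j ∈ J, v = b j
      · obtain ⟨j, hj, rfl⟩ := hvb
        refine step j hj a (fun j' hj' => (hfa j' hj').1) hresp
          (fun j' hj' => ⟨by
            simp only [Finset.mem_insert]
            push_neg
            refine ⟨fun h => (Finset.mem_erase.1 hj').1 ?_, (hfa j' (Finset.mem_of_mem_erase hj')).1⟩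
            exact hainj j' (Finset.mem_of_mem_erase hj') j hj h,
            hresp j' (Finset.mem_of_mem_erase hj')⟩)
          (fun j' hj' => ⟨by
            simp only [Finset.mem_insert]
            push_neg
            exact ⟨Ne.symm (hab j hj j' (Finset.mem_of_mem_erase hj')), (hfb j' (Finset.mem_of_mem_erase hj')).1⟩, by
            simp only [Finset.mem_insert]
            push_neg
            refine ⟨fun h => (Finset.mem_erase.1 hj').1 ?_, (hfb j' (Finset.mem_of_mem_erase hj')).2⟩
            exact hbinj j' (Finset.mem_of_mem_erase hj') j hj h⟩)
          (fun j'' hj'' => by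
            by_cases h : j'' = j
            · subst h; exact Or.inl (by simp)
            · exact Or.inr (Or.inr (Finset.mem_erase.2 ⟨h, hj''⟩)))
      · refine step j₀ hj₀ a (fun j' hj' => (hfa j' hj').1) hresp
          (fun j' hj' => ⟨by
            simp only [Finset.mem_insert]
            push_neg
            refine ⟨fun h => (Finset.mem_erase.1 hj').1 ?_, (hfa j' (Finset.mem_of_mem_erase hj')).1⟩
            exact hainj j' (Finset.mem_of_mem_erase hj') j₀ hj₀ h,
            hresp j' (Finset.mem_of_mem_erase hj')⟩)
          (fun j' hj' => ⟨by
            simp only [Finset.mem_insert]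
            push_neg
            exact ⟨Ne.symm (hab j₀ hj₀ j' (Finset.mem_of_mem_erase hj')), (hfb j' (Finset.mem_of_mem_erase hj')).1⟩, by
            simp only [Finset.mem_insert]
            push_neg
            exact ⟨fun h => hvb ⟨j', Finset.mem_of_mem_erase hj', h.symm⟩, (hfb j' (Finset.mem_of_mem_erase hj')).2⟩⟩)
          (fun j'' hj'' => by
            by_cases h : j'' = j₀
            · subst h; exact Or.inl (by simp)
            · exact Or.inr (Or.inr (Finset.mem_erase.2 ⟨h, hj''⟩)))

lemma pairingD (G : SimpleGraph W) (a b : ι → W) (k : ℕ) (J : Finset ι)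
    (hne : J.Nonempty) (D S : Finset W)
    (hfa : ∀ j ∈ J, a j ∉ D ∧ a j ∉ S)
    (hfb : ∀ j ∈ J, b j ∉ D ∧ b j ∉ S)
    (hab : ∀ j ∈ J, ∀ j' ∈ J, a j ≠ b j')
    (hainj : ∀ j ∈ J, ∀ j' ∈ J, a j = a j' → j = j')
    (hbinj : ∀ j ∈ J, ∀ j' ∈ J, b j = b j' → j = j')
    (hdom : ∀ T : Finset W, (∀ j ∈ J, a j ∈ T ∨ b j ∈ T) → Dominates G (D ∪ T)) :
    DomD G (k + J.card) D S := by
  obtain ⟨j₀, hj₀⟩ := hne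
  have hcard : k + J.card = (k + (J.erase j₀).card) + 1 := by
    rw [Finset.card_erase_of_mem hj₀]
    have : 0 < J.card := Finset.card_pos.2 ⟨j₀, hj₀⟩
    omega
  rw [hcard]
  refine DomD.move (a j₀) (hfa j₀ hj₀).1 (hfa j₀ hj₀).2 ?_
  refine pairingS G a b k (J.erase j₀).card (J.erase j₀) le_rfl _ _
    (fun j' hj' => ⟨by
      simp only [Finset.mem_insert]
      push_neg
      refine ⟨fun h => (Finset.mem_erase.1 hj').1 ?_, (hfa j' (Finset.mem_of_mem_erase hj')).1⟩
      exact hainj j' (Finset.mem_of_mem_erase hj') j₀ hj₀ h,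
      (hfa j' (Finset.mem_of_mem_erase hj')).2⟩)
    (fun j' hj' => ⟨by
      simp only [Finset.mem_insert]
      push_neg
      exact ⟨Ne.symm (hab j₀ hj₀ j' (Finset.mem_of_mem_erase hj')), (hfb j' (Finset.mem_of_mem_erase hj')).1⟩,
      (hfb j' (Finset.mem_of_mem_erase hj')).2⟩)
    (fun p hp q hq => hab p (Finset.mem_of_mem_erase hp) q (Finset.mem_of_mem_erase hq))
    (fun p hp q hq => hainj p (Finset.mem_of_mem_erase hp) q (Finset.mem_of_mem_erase hq))
    (fun p hp q hq => hbinj p (Finset.mem_of_mem_erase hp) q (Finset.mem_of_mem_erase hq))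
    ?_
  intro T hT
  have := hdom (insert (a j₀) T) (fun j'' hj'' => by
    by_cases h : j'' = j₀
    · subst h; exact Or.inl (Finset.mem_insert_self _ _)
    · rcases hT j'' (Finset.mem_erase.2 ⟨h, hj''⟩) with h' | h'
      · exact Or.inl (Finset.mem_insert_of_mem h')
      · exact Or.inr (Finset.mem_insert_of_mem h'))
  rwa [Finset.union_insert, ← Finset.insert_union] at this

end Pairing

/-! ### Dominator wins the D-game on `K_{1,2} □ K_{1,n}` -/

section DomTwo

variable {n : ℕ}

lemma cov_o {D : Finset (V 2 n)} (hD : o ∈ D) (a : Fin 1) (b : Fin 1) :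
    ∃ d ∈ D, d = ((Sum.inl a, Sum.inl b) : V 2 n) ∨ (G 2 n).Adj d (Sum.inl a, Sum.inl b) :=
  ⟨o, hD, Or.inl (by simp [o, Fin.eq_zero])⟩

lemma cov_c {D : Finset (V 2 n)} (hD : o ∈ D) (a : Fin 1) (j : Fin n) :
    ∃ d ∈ D, d = ((Sum.inl a, Sum.inr j) : V 2 n) ∨ (G 2 n).Adj d (Sum.inl a, Sum.inr j) :=
  ⟨o, hD, Or.inr (by have := adj_o_c (m := 2) j; simpa [c, Fin.eq_zero] using this)⟩

lemma cov_r {D : Finset (V 2 n)} (hD : o ∈ D) (i : Fin 2) (b : Fin 1) :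
    ∃ d ∈ D, d = ((Sum.inr i, Sum.inl b) : V 2 n) ∨ (G 2 n).Adj d (Sum.inr i, Sum.inl b) :=
  ⟨o, hD, Or.inr (by have := adj_o_r (n := n) i; simpa [r, Fin.eq_zero] using this)⟩

lemma dominatorWinsD_two (hn : 1 ≤ n) : DominatorWinsD (G 2 n) := by
  have huniv : (Finset.univ : Finset (Fin n)).card = n := by simp
  refine ⟨n + 3, DomD.move o (by simp) (by simp) (DomS.move ⟨r 0, by simp [r, o], by simp⟩
    (fun w hwD hwS => ?_))⟩
  obtain ⟨wa | wi, wb | wj⟩ := w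
  · exact absurd (by simp [o, Fin.eq_zero]) hwD
  · -- w = c wj : take r 0, then react
    refine DomD.move (r 0) (by simp [r, o]) (by simp [r, c]) (DomS.move
      ⟨r 1, by simp [r, o, Fin.ext_iff], by simp [r, c]⟩ (fun w2 hw2D hw2S => ?_))
    by_cases hw2 : w2 = r (1 : Fin 2)
    · rw [hw2]
      have hcov : ∀ T : Finset (V 2 n),
          (∀ j ∈ Finset.univ.erase wj, c j ∈ T ∨ x 1 j ∈ T) →
          Dominates (G 2 n) ((insert (x 1 wj) (insert (r 0) (insert o ∅))) ∪ T) := by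
        intro T hT u
        obtain ⟨a | i, b | j⟩ := u
        · exact cov_o (by simp [o, x]) a b
        · exact cov_c (by simp [o, x]) a j
        · exact cov_r (by simp [o, x]) i b
        · by_cases hi : i = (0 : Fin 2)
          · rw [hi]
            exact ⟨r 0, by simp [Finset.mem_union, Finset.mem_insert, r, o, x],
              Or.inr (adj_r_x 0 j)⟩
          · have hi1 : i = 1 := match i, hi with | 0, h => absurd rfl h | 1, _ => rfl
            rw [hi1]
            by_cases hj : j = wj
            · rw [hj]
              exact ⟨x 1 wj, by simp, Or.inl rfl⟩
            · rcases hT j (Finset.mem_erase.2 ⟨hj, Finset.mem_univ _⟩) with h | h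
              · exact ⟨c j, by simp [Finset.mem_union, h], Or.inr (adj_c_x 1 j)⟩
              · exact ⟨x 1 j, by simp [Finset.mem_union, h], Or.inl rfl⟩
      rw [show n + 1 = (1 + (Finset.univ.erase wj).card) + 1 by
        rw [Finset.card_erase_of_mem (Finset.mem_univ _)]; omega]
      refine DomD.move (x 1 wj) (by simp [x, o, r]) (by simp [x, c, r]) ?_
      exact pairingS (G 2 n) c (x 1) 1 _ _ le_rfl _ _
        (fun j hj => ⟨by simp [c, o, r, x], by simp [c, r, (Finset.mem_erase.1 hj).1]⟩)
        (fun j hj => ⟨by simp [x, o, r, (Finset.mem_erase.1 hj).1], by simp [x, c, r]⟩)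
        (fun j _ j' _ => by simp [c, x])
        (fun j _ j' _ h => by simpa [c] using h)
        (fun j _ j' _ h => by simpa [x] using h) hcov
    · refine DomD.move (r 1) (by simp [r, o, Fin.ext_iff]) (by
        simp only [Finset.mem_insert, Finset.mem_singleton]
        push_neg
        exact ⟨Ne.symm hw2, by simp [r, c]⟩) (DomS.win (fun u => ?_))
      obtain ⟨a | i, b | j⟩ := u
      · exact cov_o (by simp [o, r]) a b
      · exact cov_c (by simp [o, r]) a j
      · exact cov_r (by simp [o, r]) i b
      · fin_cases i
        · exact ⟨r 0, by simp, Or.inr (adj_r_x 0 j)⟩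
        · exact ⟨r 1, by simp, Or.inr (adj_r_x 1 j)⟩
  · -- w = r wi : take the other row and pair (c j, x wi j)
    have hwbz : wb = 0 := Fin.eq_zero wb
    subst hwbz
    have key : ∀ i i' : Fin 2, i ≠ i' →
        DomD (G 2 n) (n + 2) (insert o ∅) (insert (r i) ∅) := by
      intro i i' hii
      rw [show n + 2 = (1 + (Finset.univ : Finset (Fin n)).card) + 1 by omega]
      refine DomD.move (r i') (by simp [r, o]) (by simp [r, Ne.symm hii]) ?_
      refine pairingS (G 2 n) c (x i) 1 _ _ le_rfl _ _
        (fun j _ => ⟨by simp [c, o, r], by simp [c, r]⟩)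
        (fun j _ => ⟨by simp [x, o, r], by simp [x, r]⟩)
        (fun j _ j' _ => by simp [c, x])
        (fun j _ j' _ h => by simpa [c] using h)
        (fun j _ j' _ h => by simpa [x] using h) ?_
      intro T hT u
      obtain ⟨a | i'', b | j⟩ := u
      · exact cov_o (by simp [o, r]) a b
      · exact cov_c (by simp [o, r]) a j
      · exact cov_r (by simp [o, r]) i'' b
      · by_cases hi : i'' = i
        · subst hi
          rcases hT j (Finset.mem_univ _) with h | h
          · exact ⟨c j, by simp [Finset.mem_union, h], Or.inr (adj_c_x i'' j)⟩
          · exact ⟨x i'' j, by simp [Finset.mem_union, h], Or.inl rfl⟩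
        · have hieq : i'' = i' := by
            fin_cases i <;> fin_cases i' <;> fin_cases i'' <;> simp_all
          subst hieq
          exact ⟨r i'', by simp, Or.inr (adj_r_x i'' j)⟩
    fin_cases wi
    · exact key 0 1 (by simp)
    · exact key 1 0 (by simp [Fin.ext_iff])
  · -- w = x wi wj
    refine DomD.move (r 0) (by simp [r, o]) (by simp [r, x]) (DomS.move
      ⟨r 1, by simp [r, o, Fin.ext_iff], by simp [r, x]⟩ (fun w2 hw2D hw2S => ?_))
    by_cases hw2 : w2 = r (1 : Fin 2)
    · rw [hw2]
      by_cases hwi : wi = (1 : Fin 2)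
      case neg =>
        rw [show wi = 0 from match wi, hwi with | 0, _ => rfl | 1, h => absurd rfl h]
        -- x 0 wj is harmless: straight pairing on all columns, Dominator to move
        rw [show n + 1 = 1 + (Finset.univ : Finset (Fin n)).card by omega]
        refine pairingD (G 2 n) c (x 1) 1 _ (⟨⟨0, by omega⟩, Finset.mem_univ _⟩) _ _
          (fun j _ => ⟨by simp [c, o, r], by simp [c, x, r]⟩)
          (fun j _ => ⟨by simp [x, o, r], by simp [x, r, Fin.ext_iff]⟩)
          (fun j _ j' _ => by simp [c, x])
          (fun j _ j' _ h => by simpa [c] using h)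
          (fun j _ j' _ h => by simpa [x] using h) ?_
        intro T hT u
        obtain ⟨a | i, b | j⟩ := u
        · exact cov_o (by simp [o, r]) a b
        · exact cov_c (by simp [o, r]) a j
        · exact cov_r (by simp [o, r]) i b
        · fin_cases i
          · exact ⟨r 0, by simp, Or.inr (adj_r_x 0 j)⟩
          · rcases hT j (Finset.mem_univ _) with h | h
            · exact ⟨c j, by simp [Finset.mem_union, h], Or.inr (adj_c_x 1 j)⟩
            · exact ⟨x 1 j, by simp [Finset.mem_union, h], Or.inl rfl⟩
      case pos =>
        rw [hwi]
        have hcov : ∀ T : Finset (V 2 n),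
            (∀ j ∈ Finset.univ.erase wj, c j ∈ T ∨ x 1 j ∈ T) →
            Dominates (G 2 n) ((insert (c wj) (insert (r 0) (insert o ∅))) ∪ T) := by
          intro T hT u
          obtain ⟨a | i, b | j⟩ := u
          · exact cov_o (by simp [o, c]) a b
          · exact cov_c (by simp [o, c]) a j
          · exact cov_r (by simp [o, c]) i b
          · by_cases hi : i = (0 : Fin 2)
            · rw [hi]
              exact ⟨r 0, by simp [Finset.mem_union, Finset.mem_insert, r, o, c],
                Or.inr (adj_r_x 0 j)⟩
            · have hi1 : i = 1 := match i, hi with | 0, h => absurd rfl h | 1, _ => rfl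
              rw [hi1]
              by_cases hj : j = wj
              · rw [hj]
                exact ⟨c wj, by simp, Or.inr (adj_c_x 1 wj)⟩
              · rcases hT j (Finset.mem_erase.2 ⟨hj, Finset.mem_univ _⟩) with h | h
                · exact ⟨c j, by simp [Finset.mem_union, h], Or.inr (adj_c_x 1 j)⟩
                · exact ⟨x 1 j, by simp [Finset.mem_union, h], Or.inl rfl⟩
        rw [show n + 1 = (1 + (Finset.univ.erase wj).card) + 1 by
          rw [Finset.card_erase_of_mem (Finset.mem_univ _)]; omega]
        refine DomD.move (c wj) (by simp [c, o, r]) (by simp [c, x, r]) ?_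
        exact pairingS (G 2 n) c (x 1) 1 _ _ le_rfl _ _
          (fun j hj => ⟨by simp [c, o, r, (Finset.mem_erase.1 hj).1], by simp [c, x, r]⟩)
          (fun j hj => ⟨by simp [x, c, o, r], by simp [x, r, (Finset.mem_erase.1 hj).1]⟩)
          (fun j _ j' _ => by simp [c, x])
          (fun j _ j' _ h => by simpa [c] using h)
          (fun j _ j' _ h => by simpa [x] using h) hcov
    · refine DomD.move (r 1) (by simp [r, o, Fin.ext_iff]) (by
        simp only [Finset.mem_insert, Finset.mem_singleton]
        push_neg
        exact ⟨Ne.symm hw2, by simp [r, x]⟩) (DomS.win (fun u => ?_))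
      obtain ⟨a | i, b | j⟩ := u
      · exact cov_o (by simp [o, r]) a b
      · exact cov_c (by simp [o, r]) a j
      · exact cov_r (by simp [o, r]) i b
      · fin_cases i
        · exact ⟨r 0, by simp, Or.inr (adj_r_x 0 j)⟩
        · exact ⟨r 1, by simp, Or.inr (adj_r_x 1 j)⟩

end DomTwo

/-! ### Dominator wins the S-game on `K_{1,2} □ K_{1,2}` -/

section DomS22

lemma dom_of_three {W : Type*} [DecidableEq W] {G : SimpleGraph W} {D T : Finset W}
    {e₀ e₁ e₂ : W} (h0 : e₀ ∈ T) (h1 : e₁ ∈ T) (h2 : e₂ ∈ T)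
    (hd : Dominates G (insert e₀ (insert e₁ (insert e₂ D)))) : Dominates G (D ∪ T) := by
  refine dominates_mono hd (fun z hz => ?_)
  simp only [Finset.mem_insert, Finset.mem_union] at hz ⊢
  rcases hz with rfl | rfl | rfl | h
  exacts [Or.inr h0, Or.inr h1, Or.inr h2, Or.inl h]

/-- Worker: given a first Staller move `w`, a reply `d1` and three pairs that form a
winning pairing, Dominator wins. -/
lemma domS22_step (w d1 : V 2 2) (a b : Fin 3 → V 2 2)
    (hd1 : d1 ∉ ({w} : Finset (V 2 2)))
    (hfa : ∀ j ∈ (Finset.univ : Finset (Fin 3)),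
      a j ∉ ({d1} : Finset (V 2 2)) ∧ a j ∉ ({w} : Finset (V 2 2)))
    (hfb : ∀ j ∈ (Finset.univ : Finset (Fin 3)),
      b j ∉ ({d1} : Finset (V 2 2)) ∧ b j ∉ ({w} : Finset (V 2 2)))
    (hab : ∀ j ∈ (Finset.univ : Finset (Fin 3)), ∀ j' ∈ (Finset.univ : Finset (Fin 3)),
      a j ≠ b j')
    (hainj : ∀ j ∈ (Finset.univ : Finset (Fin 3)), ∀ j' ∈ (Finset.univ : Finset (Fin 3)),
      a j = a j' → j = j')
    (hbinj : ∀ j ∈ (Finset.univ : Finset (Fin 3)), ∀ j' ∈ (Finset.univ : Finset (Fin 3)),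
      b j = b j' → j = j')
    (hdom : ∀ e₀ e₁ e₂ : V 2 2, (e₀ = a 0 ∨ e₀ = b 0) → (e₁ = a 1 ∨ e₁ = b 1) →
      (e₂ = a 2 ∨ e₂ = b 2) →
      Dominates (G 2 2) (insert e₀ (insert e₁ (insert e₂ ({d1} : Finset (V 2 2)))))) :
    DomD (G 2 2) 4 ∅ (insert w ∅) := by
  rw [show (4 : ℕ) = (0 + (Finset.univ : Finset (Fin 3)).card) + 1 by simp]
  refine DomD.move d1 (by simp) hd1 ?_
  refine pairingS (G 2 2) a b 0 _ _ le_rfl _ _ hfa hfb hab hainj hbinj ?_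
  intro T hT
  have h0 := hT 0 (Finset.mem_univ _)
  have h1 := hT 1 (Finset.mem_univ _)
  have h2 := hT 2 (Finset.mem_univ _)
  rcases h0 with h0 | h0 <;> rcases h1 with h1 | h1 <;> rcases h2 with h2 | h2 <;>
    exact dom_of_three h0 h1 h2 (hdom _ _ _ (by simp) (by simp) (by simp))

lemma dominatorWinsS_22 : DominatorWinsS (G 2 2) := by
  refine ⟨4, DomS.move ⟨o, by simp, by simp⟩ (fun w hwD hwS => ?_)⟩
  obtain ⟨wa | wi, wb | wj⟩ := w
  · -- w = o
    have hwa : wa = 0 := Fin.eq_zero wa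
    have hwb : wb = 0 := Fin.eq_zero wb
    subst hwa hwb
    refine domS22_step _ (r 0) ![r 1, c 0, c 1] ![x 1 0, x 0 0, x 1 1]
      (by decide) (by decide) (by decide) (by decide) (by decide) (by decide) ?_
    intro e₀ e₁ e₂ h0 h1 h2
    rcases h0 with rfl | rfl <;> rcases h1 with rfl | rfl <;> rcases h2 with rfl | rfl <;>
      (unfold Dominates; decide)
  · -- w = c wj
    have hwa : wa = 0 := Fin.eq_zero wa
    subst hwa
    fin_cases wj
    · refine domS22_step _ (r 0) ![o, r 1, c 1] ![x 0 0, x 1 0, x 1 1]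
        (by decide) (by decide) (by decide) (by decide) (by decide) (by decide) ?_
      intro e₀ e₁ e₂ h0 h1 h2
      rcases h0 with rfl | rfl <;> rcases h1 with rfl | rfl <;> rcases h2 with rfl | rfl <;>
        (unfold Dominates; decide)
    · refine domS22_step _ (r 0) ![o, r 1, c 0] ![x 0 1, x 1 1, x 1 0]
        (by decide) (by decide) (by decide) (by decide) (by decide) (by decide) ?_
      intro e₀ e₁ e₂ h0 h1 h2
      rcases h0 with rfl | rfl <;> rcases h1 with rfl | rfl <;> rcases h2 with rfl | rfl <;>
        (unfold Dominates; decide)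
  · -- w = r wi
    have hwb : wb = 0 := Fin.eq_zero wb
    subst hwb
    fin_cases wi
    · refine domS22_step _ (c 0) ![o, r 1, c 1] ![x 0 0, x 1 1, x 0 1]
        (by decide) (by decide) (by decide) (by decide) (by decide) (by decide) ?_
      intro e₀ e₁ e₂ h0 h1 h2
      rcases h0 with rfl | rfl <;> rcases h1 with rfl | rfl <;> rcases h2 with rfl | rfl <;>
        (unfold Dominates; decide)
    · refine domS22_step _ (c 0) ![o, r 0, c 1] ![x 1 0, x 0 1, x 1 1]
        (by decide) (by decide) (by decide) (by decide) (by decide) (by decide) ?_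
      intro e₀ e₁ e₂ h0 h1 h2
      rcases h0 with rfl | rfl <;> rcases h1 with rfl | rfl <;> rcases h2 with rfl | rfl <;>
        (unfold Dominates; decide)
  · -- w = x wi wj
    fin_cases wi <;> fin_cases wj
    · refine domS22_step _ (r 0) ![o, c 0, c 1] ![r 1, x 1 0, x 1 1]
        (by decide) (by decide) (by decide) (by decide) (by decide) (by decide) ?_
      intro e₀ e₁ e₂ h0 h1 h2
      rcases h0 with rfl | rfl <;> rcases h1 with rfl | rfl <;> rcases h2 with rfl | rfl <;>
        (unfold Dominates; decide)
    · refine domS22_step _ (r 0) ![o, c 0, c 1] ![r 1, x 1 0, x 1 1]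
        (by decide) (by decide) (by decide) (by decide) (by decide) (by decide) ?_
      intro e₀ e₁ e₂ h0 h1 h2
      rcases h0 with rfl | rfl <;> rcases h1 with rfl | rfl <;> rcases h2 with rfl | rfl <;>
        (unfold Dominates; decide)
    · refine domS22_step _ (r 1) ![o, c 0, c 1] ![r 0, x 0 0, x 0 1]
        (by decide) (by decide) (by decide) (by decide) (by decide) (by decide) ?_
      intro e₀ e₁ e₂ h0 h1 h2
      rcases h0 with rfl | rfl <;> rcases h1 with rfl | rfl <;> rcases h2 with rfl | rfl <;>
        (unfold Dominates; decide)
    · refine domS22_step _ (r 1) ![o, c 0, c 1] ![r 0, x 0 0, x 0 1]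
        (by decide) (by decide) (by decide) (by decide) (by decide) (by decide) ?_
      intro e₀ e₁ e₂ h0 h1 h2
      rcases h0 with rfl | rfl <;> rcases h1 with rfl | rfl <;> rcases h2 with rfl | rfl <;>
        (unfold Dominates; decide)

end DomS22

end SPG


/-- Outcome on products of stars, `n ≥ m ≥ 2`: `o(K_{1,m} □ K_{1,n})` is `𝒟` if
`m = n = 2`, `𝒩` if `m = 2 ≤ 3 ≤ n`, and `𝒮` if `n ≥ m ≥ 3`. -/
theorem stmt_18 (m n : ℕ) (hm : 2 ≤ m) (hmn : m ≤ n) :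
    (m = 2 ∧ n = 2 →
      MBD.outcomeD (completeBipartiteGraph (Fin 1) (Fin m) □
        completeBipartiteGraph (Fin 1) (Fin n))) ∧
    (m = 2 ∧ 3 ≤ n →
      MBD.outcomeN (completeBipartiteGraph (Fin 1) (Fin m) □
        completeBipartiteGraph (Fin 1) (Fin n))) ∧
    (3 ≤ m →
      MBD.outcomeS (completeBipartiteGraph (Fin 1) (Fin m) □
        completeBipartiteGraph (Fin 1) (Fin n))) := by
  refine ⟨?_, ?_, ?_⟩
  · rintro ⟨rfl, rfl⟩
    exact ⟨SPG.dominatorWinsD_two (by norm_num), SPG.dominatorWinsS_22⟩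
  · rintro ⟨rfl, hn3⟩
    exact ⟨SPG.dominatorWinsD_two (by omega), SPG.stallerWinsS (by omega) hn3⟩
  · intro hm3
    exact ⟨SPG.stallerWinsD hm3 (by omega), SPG.stallerWinsS (by omega) (by omega)⟩
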